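/- For every n ≥ 2 and every subset A of L, the following are equivalent: (i) the space (X, τ(A)) is normal; (ii) the subset L is C*-embedded in (X, τ(A)); (iii) the subset L is z-embedded in (X, τ(A)). -/

import Mathlib

open Metric Set TopologicalSpace

noncomputable section

/-- The last coordinate `x (n-1)` of a point of `EuclideanSpace ℝ (Fin n)`
(junk value `0` if `n = 0`). -/
def lastCoord (n : ℕ) (x : EuclideanSpace ℝ (Fin n)) : ℝ :=
  if h : 0 < n then x ⟨n - 1, Nat.sub_lt h one_pos⟩ else 0

/-- The closed upper half-space `X = {x : x (n-1) ≥ 0}`. -/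
def HalfSpace (n : ℕ) : Set (EuclideanSpace ℝ (Fin n)) := {x | 0 ≤ lastCoord n x}

/-- The open upper half-space `P = {x : x (n-1) > 0}`. -/
def OpenHalf (n : ℕ) : Set (EuclideanSpace ℝ (Fin n)) := {x | 0 < lastCoord n x}

/-- The boundary hyperplane `L = {x : x (n-1) = 0}`. -/
def Bdry (n : ℕ) : Set (EuclideanSpace ℝ (Fin n)) := {x | lastCoord n x = 0}

/-- The `n`-th standard basis vector `e` (junk value `0` if `n = 0`). -/
def eVec (n : ℕ) : EuclideanSpace ℝ (Fin n) :=
  if h : 0 < n then EuclideanSpace.single ⟨n - 1, Nat.sub_lt h one_pos⟩ (1 : ℝ) else 0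

/-- The tangent ball `B̃(a, ε) = {a} ∪ B(a + ε • e, ε)`. -/
def tangentBall (n : ℕ) (a : EuclideanSpace ℝ (Fin n)) (ε : ℝ) :
    Set (EuclideanSpace ℝ (Fin n)) :=
  {a} ∪ ball (a + ε • eVec n) ε

/-- The generating family for the topology `τ(A)` on `X`:
balls `B(a,ε)` with `a ∈ P`, `0 < ε < a (n-1)`; traces `B(a,ε) ∩ X` with `a ∈ A`, `ε > 0`;
and tangent balls `B̃(a,ε)` with `a ∈ L \ A`, `ε > 0`. -/
def niemGen (n : ℕ) (A : Set (EuclideanSpace ℝ (Fin n))) : Set (Set (HalfSpace n)) :=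
  {s | ∃ a ∈ OpenHalf n, ∃ ε, 0 < ε ∧ ε < lastCoord n a ∧
      s = Subtype.val ⁻¹' ball a ε} ∪
  {s | ∃ a ∈ A, ∃ ε, 0 < ε ∧ s = Subtype.val ⁻¹' ball a ε} ∪
  {s | ∃ a ∈ Bdry n \ A, ∃ ε, 0 < ε ∧ s = Subtype.val ⁻¹' tangentBall n a ε}

/-- The topology `τ(A)` on `X`; `τ(∅)` is the Niemytzki topology `τ_N`. -/
def tau (n : ℕ) (A : Set (EuclideanSpace ℝ (Fin n))) : TopologicalSpace (HalfSpace n) :=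
  generateFrom (niemGen n A)

/-- The inclusion of `L` into `X`. -/
def inclLX (n : ℕ) (x : Bdry n) : HalfSpace n := ⟨x.1, le_of_eq x.2.symm⟩

/-- The subspace topology `τ(A)|_L` on `L` induced from `(X, τ(A))`. -/
def tauL (n : ℕ) (A : Set (EuclideanSpace ℝ (Fin n))) : TopologicalSpace (Bdry n) :=
  TopologicalSpace.induced (inclLX n) (tau n A)

/-- A space is perfect if every closed set is a `Gδ`-set. -/
def IsPerfectSpace (X : Type*) [TopologicalSpace X] : Prop :=
  ∀ s : Set X, IsClosed s → IsGδ s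

/-- An `Fσ`-set: a countable union of closed sets. -/
def IsFsigma {X : Type*} [TopologicalSpace X] (s : Set X) : Prop :=
  ∃ F : ℕ → Set X, (∀ i, IsClosed (F i)) ∧ s = ⋃ i, F i

/-- Countably paracompact: every countable open cover admits a locally finite open refinement. -/
def CountablyParacompact (X : Type*) [TopologicalSpace X] : Prop :=
  ∀ u : ℕ → Set X, (∀ i, IsOpen (u i)) → (⋃ i, u i) = Set.univ →
    ∃ (ι : Type) (v : ι → Set X), (∀ j, IsOpen (v j)) ∧ (⋃ j, v j) = Set.univ ∧
      LocallyFinite v ∧ ∀ j, ∃ i, v j ⊆ u i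

/-- A zero set: the zero locus of a continuous real-valued function. -/
def IsZeroSet {X : Type*} [TopologicalSpace X] (s : Set X) : Prop :=
  ∃ f : X → ℝ, Continuous f ∧ s = f ⁻¹' {0}

/-- `Y` is z-embedded in `X` if every zero set of the subspace `Y`
is the trace on `Y` of a zero set of `X`. -/
def ZEmbedded {X : Type*} [TopologicalSpace X] (Y : Set X) : Prop :=
  ∀ s : Set Y, IsZeroSet s → ∃ Z : Set X, IsZeroSet Z ∧ s = Subtype.val ⁻¹' Z

/-- `Y` is `C*`-embedded in `X` if every bounded continuous real-valued function on the
subspace `Y` extends to a bounded continuous function on `X`. -/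
def CStarEmbedded {X : Type*} [TopologicalSpace X] (Y : Set X) : Prop :=
  ∀ f : Y → ℝ, Continuous f → (∃ M, ∀ y, |f y| ≤ M) →
    ∃ g : X → ℝ, Continuous g ∧ (∃ M, ∀ x, |g x| ≤ M) ∧ ∀ y : Y, g ↑y = f y
end
section aux
open Metric Set TopologicalSpace Filter Topology RealInnerProductSpace

variable {n : ℕ}

lemma lastCoord_def (hn : 0 < n) (x : EuclideanSpace ℝ (Fin n)) :
    lastCoord n x = x ⟨n-1, Nat.sub_lt hn one_pos⟩ := dif_pos hn

lemma abs_lastCoord_le_norm (x : EuclideanSpace ℝ (Fin n)) : |lastCoord n x| ≤ ‖x‖ := by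
  rcases Nat.eq_zero_or_pos n with h | h
  · subst h; simp [lastCoord]
  · rw [lastCoord_def h]
    set i : Fin n := ⟨n-1, Nat.sub_lt h one_pos⟩
    rw [EuclideanSpace.norm_eq]
    have h1 : |x i| = Real.sqrt (‖x i‖^2) := by
      rw [Real.sqrt_sq (norm_nonneg _)]; exact (Real.norm_eq_abs _).symm
    rw [h1]
    apply Real.sqrt_le_sqrt
    exact Finset.single_le_sum (f := fun j => ‖x j‖^2) (fun j _ => sq_nonneg _)
      (Finset.mem_univ i)

lemma lastCoord_add (x y : EuclideanSpace ℝ (Fin n)) :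
    lastCoord n (x + y) = lastCoord n x + lastCoord n y := by
  rcases Nat.eq_zero_or_pos n with h | h
  · subst h; simp [lastCoord]
  · simp only [lastCoord_def h]; rfl

lemma lastCoord_smul (c : ℝ) (x : EuclideanSpace ℝ (Fin n)) :
    lastCoord n (c • x) = c * lastCoord n x := by
  rcases Nat.eq_zero_or_pos n with h | h
  · subst h; simp [lastCoord]
  · simp only [lastCoord_def h]; rfl

lemma lastCoord_sub (x y : EuclideanSpace ℝ (Fin n)) :
    lastCoord n (x - y) = lastCoord n x - lastCoord n y := by
  rcases Nat.eq_zero_or_pos n with h | h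
  · subst h; simp [lastCoord]
  · simp only [lastCoord_def h]; rfl

lemma lastCoord_eVec (hn : 0 < n) : lastCoord n (eVec n) = 1 := by
  rw [lastCoord_def hn, eVec, dif_pos hn, EuclideanSpace.single_apply, if_pos rfl]

lemma norm_eVec (hn : 0 < n) : ‖eVec n‖ = 1 := by
  rw [eVec, dif_pos hn, EuclideanSpace.norm_single, norm_one]

lemma inner_eVec (hn : 0 < n) (x : EuclideanSpace ℝ (Fin n)) :
    ⟪x, eVec n⟫ = lastCoord n x := by
  rw [eVec, dif_pos hn, lastCoord_def hn]
  simpa using EuclideanSpace.inner_single_right (𝕜 := ℝ) ⟨n-1, Nat.sub_lt hn one_pos⟩ 1 x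

lemma abs_lastCoord_sub_le (x y : EuclideanSpace ℝ (Fin n)) :
    |lastCoord n x - lastCoord n y| ≤ dist x y := by
  rw [← lastCoord_sub, dist_eq_norm]; exact abs_lastCoord_le_norm _

lemma lastCoord_cont : Continuous (lastCoord n) := by
  apply LipschitzWith.continuous (K := 1)
  apply LipschitzWith.of_dist_le_mul
  intro x y
  rw [Real.dist_eq, NNReal.coe_one, one_mul]
  exact abs_lastCoord_sub_le x y

end aux
section geo
open Metric Set TopologicalSpace Filter Topology RealInnerProductSpace

variable {n : ℕ}

lemma lastCoord_tb (hn : 0 < n) {a : EuclideanSpace ℝ (Fin n)} (ha : lastCoord n a = 0)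
    {ε : ℝ} {x : EuclideanSpace ℝ (Fin n)} (hx : x ∈ ball (a + ε • eVec n) ε) :
    |lastCoord n x - ε| < ε := by
  have h1 : lastCoord n (a + ε • eVec n) = ε := by
    rw [lastCoord_add, lastCoord_smul, lastCoord_eVec hn, ha, mul_one, zero_add]
  calc |lastCoord n x - ε| = |lastCoord n x - lastCoord n (a + ε • eVec n)| := by rw [h1]
    _ ≤ dist x (a + ε • eVec n) := abs_lastCoord_sub_le _ _
    _ < ε := hx

lemma tb_pos (hn : 0 < n) {a : EuclideanSpace ℝ (Fin n)} (ha : lastCoord n a = 0)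
    {ε : ℝ} {x : EuclideanSpace ℝ (Fin n)} (hx : x ∈ ball (a + ε • eVec n) ε) :
    0 < lastCoord n x ∧ lastCoord n x < 2 * ε := by
  have := lastCoord_tb hn ha hx
  rw [abs_lt] at this
  constructor <;> linarith [this.1, this.2]

lemma tb_dist (hn : 0 < n) {a : EuclideanSpace ℝ (Fin n)}
    {ε : ℝ} (hε : 0 < ε) {x : EuclideanSpace ℝ (Fin n)} (hx : x ∈ ball (a + ε • eVec n) ε) :
    dist x a < 2 * ε := by
  have h2 : dist (a + ε • eVec n) a = ε := by
    rw [dist_eq_norm, add_sub_cancel_left, norm_smul, norm_eVec hn, Real.norm_eq_abs,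
      abs_of_pos hε, mul_one]
  calc dist x a ≤ dist x (a + ε • eVec n) + dist (a + ε • eVec n) a := dist_triangle _ _ _
    _ < ε + ε := by rw [h2]; linarith [mem_ball.1 hx]
    _ = 2 * ε := by ring

lemma tb_mono (hn : 0 < n) {a : EuclideanSpace ℝ (Fin n)} {δ ε : ℝ} (hδ : 0 < δ)
    (hδε : δ ≤ ε) : tangentBall n a δ ⊆ tangentBall n a ε := by
  rintro x (hx | hx)
  · exact Or.inl hx
  · right
    have h2 : dist (a + δ • eVec n) (a + ε • eVec n) = ε - δ := by
      rw [dist_eq_norm]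
      have : a + δ • eVec n - (a + ε • eVec n) = (δ - ε) • eVec n := by
        rw [sub_smul]; abel
      rw [this, norm_smul, norm_eVec hn, Real.norm_eq_abs, mul_one, abs_of_nonpos (by linarith)]
      ring
    have := dist_triangle x (a + δ • eVec n) (a + ε • eVec n)
    rw [mem_ball] at hx ⊢
    rw [h2] at this
    linarith

/-- key margin lemma: inside a tangent ball, the Euclidean ball of radius `x_n / 2`
stays inside the doubled tangent ball. -/
lemma tb_margin (hn : 0 < n) {a : EuclideanSpace ℝ (Fin n)} (ha : lastCoord n a = 0)
    {ε : ℝ} (hε : 0 < ε) {x : EuclideanSpace ℝ (Fin n)} (hx : x ∈ ball (a + ε • eVec n) ε) :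
    ball x (lastCoord n x / 2) ⊆ ball (a + (2*ε) • eVec n) (2*ε) := by
  obtain ⟨hx1, hx2⟩ := tb_pos hn ha hx
  have hkey : dist x (a + (2*ε) • eVec n) < 2*ε - lastCoord n x / 2 := by
    set u := x - (a + ε • eVec n) with hu
    have hun : ‖u‖ < ε := by rw [hu, ← dist_eq_norm]; exact hx
    have hue : ⟪u, eVec n⟫ = lastCoord n x - ε := by
      rw [hu, inner_sub_left, inner_eVec hn, inner_eVec hn, lastCoord_add, lastCoord_smul,
        lastCoord_eVec hn, ha, mul_one, zero_add]
    have hexp : x - (a + (2*ε) • eVec n) = u - ε • eVec n := by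
      rw [hu]
      have : (2*ε) • eVec n = ε • eVec n + ε • eVec n := by rw [← add_smul]; ring_nf
      rw [this]; abel
    have hsq : ‖x - (a + (2*ε) • eVec n)‖^2 = ‖u‖^2 - 2*ε*(lastCoord n x - ε) + ε^2 := by
      rw [hexp, norm_sub_sq_real, inner_smul_right, hue, norm_smul, norm_eVec hn,
        Real.norm_eq_abs, abs_of_pos hε, mul_one]
      ring
    have hb : ‖x - (a + (2*ε) • eVec n)‖^2 < (2*ε - lastCoord n x / 2)^2 := by
      rw [hsq]
      have h1 : ‖u‖^2 < ε^2 := by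
        have := abs_of_nonneg (norm_nonneg u) ▸ hun
        nlinarith [norm_nonneg u]
      nlinarith [sq_nonneg (lastCoord n x)]
    have hpos : (0:ℝ) ≤ 2*ε - lastCoord n x / 2 := by linarith
    rw [dist_eq_norm]
    exact lt_of_pow_lt_pow_left₀ 2 hpos hb
  intro y hy
  rw [mem_ball] at hy ⊢
  calc dist y (a + (2*ε) • eVec n) ≤ dist y x + dist x (a + (2*ε) • eVec n) := dist_triangle _ _ _
    _ < lastCoord n x / 2 + (2*ε - lastCoord n x / 2) := add_lt_add hy hkey
    _ = 2*ε := by ring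

end geo
section can
open Metric Set TopologicalSpace Filter Topology
open scoped Classical

variable {n : ℕ} {A : Set (EuclideanSpace ℝ (Fin n))}

/-- Canonical basic neighborhoods. -/
noncomputable def can (A : Set (EuclideanSpace ℝ (Fin n))) (x : HalfSpace n) (δ : ℝ) :
    Set (HalfSpace n) :=
  if 0 < lastCoord n x.1 ∨ x.1 ∈ A then Subtype.val ⁻¹' ball x.1 δ
  else Subtype.val ⁻¹' tangentBall n x.1 δ

lemma self_mem_can {x : HalfSpace n} {δ : ℝ} (hδ : 0 < δ) : x ∈ can A x δ := by
  unfold can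
  split
  · exact mem_ball_self hδ
  · exact Or.inl rfl

lemma can_mono (hn : 0 < n) {x : HalfSpace n} {δ ε : ℝ} (hδ : 0 < δ) (h : δ ≤ ε) :
    can A x δ ⊆ can A x ε := by
  unfold can
  split
  · exact preimage_mono (ball_subset_ball h)
  · exact preimage_mono (tb_mono hn hδ h)

lemma can_subset_ball (hn : 0 < n) {x : HalfSpace n} {δ : ℝ} (hδ : 0 < δ) :
    can A x δ ⊆ Subtype.val ⁻¹' ball x.1 (2*δ) := by
  unfold can
  split
  · exact preimage_mono (ball_subset_ball (by linarith))
  · intro y hy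
    rcases hy with hy | hy
    · simp only [mem_preimage, mem_ball]
      have : (y : EuclideanSpace ℝ (Fin n)) = x.1 := hy
      rw [this]; simpa using by linarith
    · exact tb_dist hn hδ hy

lemma lc_eq_zero_of_not_pos {x : HalfSpace n} (h : ¬ 0 < lastCoord n x.1) :
    lastCoord n x.1 = 0 := le_antisymm (not_lt.1 h) x.2

lemma can_mem_gen (hA : A ⊆ Bdry n) {x : HalfSpace n} {δ : ℝ} (hδ : 0 < δ) :
    ∃ δ', 0 < δ' ∧ δ' ≤ δ ∧ can A x δ' ∈ niemGen n A := by
  by_cases h1 : 0 < lastCoord n x.1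
  · refine ⟨min δ (lastCoord n x.1 / 2), by positivity, min_le_left _ _, ?_⟩
    apply Or.inl; apply Or.inl
    refine ⟨x.1, h1, min δ (lastCoord n x.1 / 2), by positivity,
      lt_of_le_of_lt (min_le_right _ _) (by linarith), ?_⟩
    unfold can
    rw [if_pos (Or.inl h1)]
  · by_cases h2 : x.1 ∈ A
    · refine ⟨δ, hδ, le_refl _, ?_⟩
      apply Or.inl; apply Or.inr
      refine ⟨x.1, h2, δ, hδ, ?_⟩
      unfold can
      rw [if_pos (Or.inr h2)]
    · refine ⟨δ, hδ, le_refl _, ?_⟩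
      apply Or.inr
      refine ⟨x.1, ⟨lc_eq_zero_of_not_pos h1, h2⟩, δ, hδ, ?_⟩
      unfold can
      rw [if_neg (by tauto)]

lemma gen_can (hn : 0 < n) {g : Set (HalfSpace n)} (hg : g ∈ niemGen n A)
    {x : HalfSpace n} (hx : x ∈ g) : ∃ δ, 0 < δ ∧ can A x δ ⊆ g := by
  rcases hg with (⟨a, ha, ε, hε, hεa, rfl⟩ | ⟨a, ha, ε, hε, rfl⟩) | ⟨a, ha, ε, hε, rfl⟩
  · -- interior ball
    simp only [mem_preimage, mem_ball] at hx
    refine ⟨(ε - dist x.1 a)/2, by linarith, ?_⟩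
    refine (can_subset_ball hn (by linarith)).trans ?_
    intro y hy
    simp only [mem_preimage, mem_ball] at hy ⊢
    have := dist_triangle y.1 x.1 a
    linarith
  · -- flat ball at a point of A
    simp only [mem_preimage, mem_ball] at hx
    refine ⟨(ε - dist x.1 a)/2, by linarith, ?_⟩
    refine (can_subset_ball hn (by linarith)).trans ?_
    intro y hy
    simp only [mem_preimage, mem_ball] at hy ⊢
    have := dist_triangle y.1 x.1 a
    linarith
  · -- tangent ball
    rcases hx with hx | hx
    · have hxa : x.1 = a := hx
      have h1 : ¬ (0 < lastCoord n x.1 ∨ x.1 ∈ A) := by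
        rw [hxa]
        rintro (hc | hc)
        · rw [(ha.1 : lastCoord n a = 0)] at hc; exact lt_irrefl 0 hc
        · exact ha.2 hc
      refine ⟨ε, hε, ?_⟩
      unfold can
      rw [if_neg h1]
      rw [hxa]
    · have hx1 : 0 < lastCoord n x.1 := (tb_pos hn ha.1 hx).1
      simp only [mem_ball] at hx
      refine ⟨ε - dist x.1 (a + ε • eVec n), by linarith, ?_⟩
      unfold can
      rw [if_pos (Or.inl hx1)]
      intro y hy
      simp only [mem_preimage, mem_ball] at hy
      right
      simp only [mem_ball]
      have := dist_triangle y.1 x.1 (a + ε • eVec n)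
      linarith

lemma isOpen_tau_iff (hA : A ⊆ Bdry n) (hn : 0 < n) {s : Set (HalfSpace n)} :
    @IsOpen _ (tau n A) s ↔ ∀ x ∈ s, ∃ δ, 0 < δ ∧ can A x δ ⊆ s := by
  constructor
  · intro h
    have h' : TopologicalSpace.GenerateOpen (niemGen n A) s := h
    clear h
    induction h' with
    | basic u hu => exact fun x hx => gen_can hn hu hx
    | univ => exact fun x _ => ⟨1, one_pos, subset_univ _⟩
    | inter u v _ _ ihu ihv =>
        intro x hx
        obtain ⟨δ1, hδ1, hs1⟩ := ihu x hx.1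
        obtain ⟨δ2, hδ2, hs2⟩ := ihv x hx.2
        refine ⟨min δ1 δ2, lt_min hδ1 hδ2, subset_inter ?_ ?_⟩
        · exact (can_mono hn (lt_min hδ1 hδ2) (min_le_left _ _)).trans hs1
        · exact (can_mono hn (lt_min hδ1 hδ2) (min_le_right _ _)).trans hs2
    | sUnion S _ ih =>
        rintro x ⟨u, huS, hxu⟩
        obtain ⟨δ, hδ, hsub⟩ := ih u huS x hxu
        exact ⟨δ, hδ, hsub.trans (subset_sUnion_of_mem huS)⟩
  · intro h
    letI := tau n A
    have key : ∀ x : s, ∃ u, u ∈ niemGen n A ∧ (x : HalfSpace n) ∈ u ∧ u ⊆ s := by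
      rintro ⟨x, hx⟩
      obtain ⟨δ, hδ, hsub⟩ := h x hx
      obtain ⟨δ', hδ', hle, hmem⟩ := can_mem_gen hA hδ
      exact ⟨can A x δ', hmem, self_mem_can hδ', (can_mono hn hδ' hle).trans hsub⟩
    choose u hu hxu hus using key
    have hs : s = ⋃ x : s, u x := by
      apply Subset.antisymm
      · intro x hx
        exact mem_iUnion.2 ⟨⟨x, hx⟩, hxu ⟨x, hx⟩⟩
      · exact iUnion_subset hus
    rw [hs]
    exact isOpen_iUnion (fun x => TopologicalSpace.isOpen_generateFrom_of_mem (hu x))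

lemma mem_nhds_tau (hA : A ⊆ Bdry n) (hn : 0 < n) {x : HalfSpace n} {s : Set (HalfSpace n)} :
    s ∈ @nhds _ (tau n A) x ↔ ∃ δ, 0 < δ ∧ can A x δ ⊆ s := by
  letI := tau n A
  constructor
  · intro h
    obtain ⟨t, hts, hto, hxt⟩ := mem_nhds_iff.1 h
    obtain ⟨δ, hδ, hsub⟩ := (isOpen_tau_iff hA hn).1 hto x hxt
    exact ⟨δ, hδ, hsub.trans hts⟩
  · rintro ⟨δ, hδ, hsub⟩
    obtain ⟨δ', hδ', hle, hmem⟩ := can_mem_gen hA hδ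
    exact mem_nhds_iff.2 ⟨can A x δ', (can_mono hn hδ' hle).trans hsub,
      TopologicalSpace.isOpen_generateFrom_of_mem hmem, self_mem_can hδ'⟩

lemma isOpen_tau_euclid (hA : A ⊆ Bdry n) (hn : 0 < n) {E : Set (EuclideanSpace ℝ (Fin n))}
    (hE : IsOpen E) : @IsOpen _ (tau n A) (Subtype.val ⁻¹' E) := by
  rw [isOpen_tau_iff hA hn]
  intro x hx
  obtain ⟨r, hr, hball⟩ := Metric.isOpen_iff.1 hE x.1 hx
  refine ⟨r/2, by linarith, ?_⟩
  refine (can_subset_ball hn (by linarith)).trans ?_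
  refine preimage_mono ?_
  refine subset_trans (by rw [show 2*(r/2) = r by ring]) hball

lemma cont_val (hA : A ⊆ Bdry n) (hn : 0 < n) :
    @Continuous _ _ (tau n A) _ (Subtype.val : HalfSpace n → EuclideanSpace ℝ (Fin n)) := by
  rw [continuous_def]
  exact fun E hE => isOpen_tau_euclid hA hn hE

lemma cont_lc (hA : A ⊆ Bdry n) (hn : 0 < n) :
    @Continuous _ _ (tau n A) _ (fun x : HalfSpace n => lastCoord n x.1) := by
  letI := tau n A
  exact lastCoord_cont.comp (cont_val hA hn)

lemma isClosed_L (hA : A ⊆ Bdry n) (hn : 0 < n) :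
    @IsClosed _ (tau n A) (Subtype.val ⁻¹' Bdry n) := by
  have : (Subtype.val ⁻¹' Bdry n : Set (HalfSpace n))
      = (fun x : HalfSpace n => lastCoord n x.1) ⁻¹' {0} := by
    ext x; simp [Bdry]
  rw [this]
  exact @IsClosed.preimage _ _ (tau n A) _ _ (cont_lc hA hn) _ isClosed_singleton

lemma isOpen_P (hA : A ⊆ Bdry n) (hn : 0 < n) :
    @IsOpen _ (tau n A) {x : HalfSpace n | 0 < lastCoord n x.1} := by
  have : {x : HalfSpace n | 0 < lastCoord n x.1}
      = (fun x : HalfSpace n => lastCoord n x.1) ⁻¹' Ioi 0 := rfl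
  rw [this]
  exact @Continuous.isOpen_preimage _ _ (tau n A) _ _ (cont_lc hA hn) _ isOpen_Ioi

end can
section bdryY
open Metric Set TopologicalSpace Filter Topology
open scoped Classical

variable {n : ℕ} {A : Set (EuclideanSpace ℝ (Fin n))}

lemma mem_nhds_Y (hA : A ⊆ Bdry n) (hn : 0 < n)
    {y : (Subtype.val ⁻¹' Bdry n : Set (HalfSpace n))}
    {s : Set (Subtype.val ⁻¹' Bdry n : Set (HalfSpace n))} :
    s ∈ @nhds _ (@instTopologicalSpaceSubtype _ _ (tau n A)) y ↔
      ∃ δ, 0 < δ ∧ (Subtype.val ⁻¹' can A y.1 δ) ⊆ s := by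
  letI := tau n A
  rw [nhds_induced, mem_comap]
  constructor
  · rintro ⟨t, ht, hts⟩
    obtain ⟨δ, hδ, hsub⟩ := (mem_nhds_tau hA hn).1 ht
    exact ⟨δ, hδ, (preimage_mono hsub).trans hts⟩
  · rintro ⟨δ, hδ, hsub⟩
    exact ⟨can A y.1 δ, (mem_nhds_tau hA hn).2 ⟨δ, hδ, subset_rfl⟩, hsub⟩

lemma lcY {y : (Subtype.val ⁻¹' Bdry n : Set (HalfSpace n))} : lastCoord n y.1.1 = 0 := y.2

lemma trace_can_A (hn : 0 < n) {y : (Subtype.val ⁻¹' Bdry n : Set (HalfSpace n))}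
    (hy : y.1.1 ∈ A) (δ : ℝ) :
    (Subtype.val ⁻¹' can A y.1 δ : Set (Subtype.val ⁻¹' Bdry n : Set (HalfSpace n)))
      = {z | dist z.1.1 y.1.1 < δ} := by
  have h1 : (0 < lastCoord n y.1.1 ∨ y.1.1 ∈ A) := Or.inr hy
  ext z
  simp only [mem_preimage, can, if_pos h1, mem_ball, mem_setOf_eq]

lemma trace_can_isolated (hn : 0 < n) {y : (Subtype.val ⁻¹' Bdry n : Set (HalfSpace n))}
    (hy : y.1.1 ∉ A) {δ : ℝ} (hδ : 0 < δ) :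
    (Subtype.val ⁻¹' can A y.1 δ : Set (Subtype.val ⁻¹' Bdry n : Set (HalfSpace n)))
      = {y} := by
  have h1 : ¬ (0 < lastCoord n y.1.1 ∨ y.1.1 ∈ A) := by
    rintro (hc | hc)
    · rw [lcY] at hc; exact lt_irrefl 0 hc
    · exact hy hc
  ext z
  simp only [mem_preimage, can, if_neg h1, mem_singleton_iff]
  constructor
  · rintro (hz | hz)
    · have : z.1.1 = y.1.1 := hz
      exact Subtype.ext (Subtype.ext this)
    · exfalso
      have := (tb_pos hn lcY hz).1
      rw [lcY] at this
      exact lt_irrefl 0 this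
  · rintro rfl
    exact Or.inl rfl

lemma contYval (hA : A ⊆ Bdry n) (hn : 0 < n) :
    @Continuous (Subtype.val ⁻¹' Bdry n : Set (HalfSpace n)) _
      (@instTopologicalSpaceSubtype _ _ (tau n A)) _ (fun z => z.1.1) := by
  letI := tau n A
  exact (cont_val hA hn).comp continuous_subtype_val

lemma normalY (hA : A ⊆ Bdry n) (hn : 0 < n) :
    @NormalSpace (Subtype.val ⁻¹' Bdry n : Set (HalfSpace n))
      (@instTopologicalSpaceSubtype _ _ (tau n A)) := by
  letI := tau n A
  constructor
  intro s t hs ht hst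
  -- radii for points of s
  have hsep : ∀ (s t : Set (Subtype.val ⁻¹' Bdry n : Set (HalfSpace n))), IsClosed t →
      Disjoint s t → ∀ y, ∃ δ, 0 < δ ∧ (y ∈ s → y.1.1 ∈ A → ∀ z ∈ t, δ ≤ dist z.1.1 y.1.1) := by
    intro s t ht hst y
    by_cases hy : y ∈ s ∧ y.1.1 ∈ A
    · have hyt : y ∉ t := fun h => Set.disjoint_left.1 hst hy.1 h
      have : tᶜ ∈ 𝓝 y := ht.isOpen_compl.mem_nhds hyt
      obtain ⟨δ, hδ, hsub⟩ := (mem_nhds_Y hA hn).1 this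
      rw [trace_can_A hn hy.2] at hsub
      refine ⟨δ, hδ, fun _ _ z hz => ?_⟩
      by_contra hc
      exact (hsub (not_le.1 hc)) hz
    · exact ⟨1, one_pos, fun h1 h2 => absurd ⟨h1, h2⟩ hy⟩
  choose rs hrs0 hrs using hsep s t ht hst
  choose rt hrt0 hrt using hsep t s hs (Disjoint.symm hst)
  set U := ⋃ y ∈ s, (if y.1.1 ∈ A then {z : (Subtype.val ⁻¹' Bdry n : Set (HalfSpace n)) |
      dist z.1.1 y.1.1 < rs y / 2} else {y}) with hU
  set V := ⋃ y ∈ t, (if y.1.1 ∈ A then {z : (Subtype.val ⁻¹' Bdry n : Set (HalfSpace n)) |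
      dist z.1.1 y.1.1 < rt y / 2} else {y}) with hV
  have hopen : ∀ (r : (Subtype.val ⁻¹' Bdry n : Set (HalfSpace n)) → ℝ)
      (w : Set (Subtype.val ⁻¹' Bdry n : Set (HalfSpace n))) (hr : ∀ y, 0 < r y),
      IsOpen (⋃ y ∈ w, (if y.1.1 ∈ A then {z : (Subtype.val ⁻¹' Bdry n : Set (HalfSpace n)) |
        dist z.1.1 y.1.1 < r y / 2} else {y})) := by
    intro r w hr
    apply isOpen_biUnion
    intro y hy
    split
    · have : {z : (Subtype.val ⁻¹' Bdry n : Set (HalfSpace n)) | dist z.1.1 y.1.1 < r y / 2}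
          = (fun z : (Subtype.val ⁻¹' Bdry n : Set (HalfSpace n)) => z.1.1) ⁻¹'
            (ball y.1.1 (r y / 2)) := rfl
      rw [this]
      exact (contYval hA hn).isOpen_preimage _ isOpen_ball
    · next hyA =>
      rw [isOpen_iff_mem_nhds]
      rintro z rfl
      rw [mem_nhds_Y hA hn]
      exact ⟨1, one_pos, by rw [trace_can_isolated hn hyA one_pos]⟩
  have hcov : ∀ (r : (Subtype.val ⁻¹' Bdry n : Set (HalfSpace n)) → ℝ)
      (w : Set (Subtype.val ⁻¹' Bdry n : Set (HalfSpace n))) (hr : ∀ y, 0 < r y),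
      w ⊆ (⋃ y ∈ w, (if y.1.1 ∈ A then {z : (Subtype.val ⁻¹' Bdry n : Set (HalfSpace n)) |
        dist z.1.1 y.1.1 < r y / 2} else {y})) := by
    intro r w hr y hy
    refine mem_biUnion hy ?_
    split
    · simp only [mem_setOf_eq, dist_self]
      linarith [hr y]
    · exact rfl
  refine ⟨U, V, hopen rs s hrs0, hopen rt t hrt0, hcov rs s hrs0, hcov rt t hrt0, ?_⟩
  rw [Set.disjoint_left]
  rintro z hzU hzV
  simp only [hU, hV, mem_iUnion] at hzU hzV
  obtain ⟨y, hy, hzy⟩ := hzU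
  obtain ⟨y', hy', hzy'⟩ := hzV
  by_cases hyA : y.1.1 ∈ A <;> by_cases hy'A : y'.1.1 ∈ A
  · rw [if_pos hyA] at hzy; rw [if_pos hy'A] at hzy'
    simp only [mem_setOf_eq] at hzy hzy'
    have h1 : rs y ≤ dist y'.1.1 y.1.1 := hrs y hy hyA y' hy'
    have h2 : rt y' ≤ dist y.1.1 y'.1.1 := hrt y' hy' hy'A y hy
    have h3 := dist_triangle y'.1.1 z.1.1 y.1.1
    rw [dist_comm y'.1.1 z.1.1] at h3
    rw [dist_comm y.1.1 y'.1.1] at h2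
    linarith
  · rw [if_pos hyA] at hzy; rw [if_neg hy'A] at hzy'
    simp only [mem_setOf_eq] at hzy
    rw [mem_singleton_iff] at hzy'
    subst hzy'
    have h1 : rs y ≤ dist z.1.1 y.1.1 := hrs y hy hyA z hy'
    linarith [hrs0 y]
  · rw [if_neg hyA] at hzy; rw [if_pos hy'A] at hzy'
    simp only [mem_setOf_eq] at hzy'
    rw [mem_singleton_iff] at hzy
    subst hzy
    have h1 : rt y' ≤ dist z.1.1 y'.1.1 := hrt y' hy' hy'A z hy
    linarith [hrt0 y']
  · rw [if_neg hyA] at hzy; rw [if_neg hy'A] at hzy'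
    rw [mem_singleton_iff] at hzy hzy'
    subst hzy; subst hzy'
    exact Set.disjoint_left.1 hst hy hy'

end bdryY
section cstarnormal
open Metric Set TopologicalSpace Filter Topology
open scoped Classical

variable {n : ℕ} {A : Set (EuclideanSpace ℝ (Fin n))}

lemma expand_can (hn : 0 < n) {x z y : HalfSpace n} (hx : lastCoord n x.1 = 0)
    {δ : ℝ} (hδ : 0 < δ) (hz : z ∈ can A x δ)
    (hy : dist y.1 z.1 < lastCoord n z.1 / 2) : y ∈ can A x (2*δ) := by
  have hlz : |lastCoord n z.1| ≤ dist z.1 x.1 := by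
    have := abs_lastCoord_sub_le z.1 x.1
    rwa [hx, sub_zero] at this
  unfold can at hz ⊢
  split at hz <;> rename_i hcond
  · rw [if_pos hcond]
    simp only [mem_preimage, mem_ball] at hz ⊢
    have h1 : lastCoord n z.1 < δ := lt_of_le_of_lt (le_trans (le_abs_self _) hlz) hz
    have := dist_triangle y.1 z.1 x.1
    linarith
  · rw [if_neg hcond]
    rcases hz with hz | hz
    · exfalso
      have hzx : (z : EuclideanSpace ℝ (Fin n)) = x.1 := hz
      rw [hzx, hx] at hy
      simp at hy
      exact absurd hy (not_lt.2 dist_nonneg)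
    · right
      have := tb_margin hn hx hδ hz
      exact this (by rwa [mem_ball])

lemma not_mem_closure_aux (hA : A ⊆ Bdry n) (hn : 0 < n) {G S : Set (HalfSpace n)}
    (hG : @IsClosed _ (tau n A) G) {x : HalfSpace n} (hx : lastCoord n x.1 = 0) (hxG : x ∉ G)
    (hS : ∀ z ∈ S, ∃ y ∈ G, dist y.1 z.1 < lastCoord n z.1 / 2) :
    x ∉ @closure _ (tau n A) S := by
  letI := tau n A
  have hGc : Gᶜ ∈ 𝓝 x := hG.isOpen_compl.mem_nhds hxG
  obtain ⟨ε, hε, hsub⟩ := (mem_nhds_tau hA hn).1 hGc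
  intro hcl
  have hnbd : can A x (ε/2) ∈ 𝓝 x := (mem_nhds_tau hA hn).2 ⟨ε/2, by linarith, subset_rfl⟩
  obtain ⟨z, hz1, hz2⟩ := mem_closure_iff_nhds.1 hcl _ hnbd
  obtain ⟨y, hyG, hyz⟩ := hS z hz2
  have hdy : dist y.1 z.1 < lastCoord n z.1 / 2 := hyz
  have : y ∈ can A x (2*(ε/2)) := expand_can hn hx (by linarith) hz1 hdy
  rw [show 2*(ε/2) = ε by ring] at this
  exact hsub this hyG

lemma pointsep (hA : A ⊆ Bdry n) (hn : 0 < n) {G : Set (HalfSpace n)}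
    (hG : @IsClosed _ (tau n A) G) {x : HalfSpace n} (hx : 0 < lastCoord n x.1) (hxG : x ∉ G) :
    ∃ δ, 0 < δ ∧ δ ≤ lastCoord n x.1 ∧ ∀ z ∈ G, δ ≤ dist z.1 x.1 := by
  letI := tau n A
  have hGc : Gᶜ ∈ 𝓝 x := hG.isOpen_compl.mem_nhds hxG
  obtain ⟨ε, hε, hsub⟩ := (mem_nhds_tau hA hn).1 hGc
  refine ⟨min ε (lastCoord n x.1), lt_min hε hx, min_le_right _ _, fun z hz => ?_⟩
  by_contra hc
  push_neg at hc
  have hzc : z ∈ can A x ε := by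
    unfold can
    rw [if_pos (Or.inl hx)]
    simp only [mem_preimage, mem_ball]
    exact lt_of_lt_of_le hc (min_le_left _ _)
  exact hsub hzc hz

lemma cstar_normal (hn2 : 2 ≤ n) (hA : A ⊆ Bdry n)
    (hC : @CStarEmbedded (HalfSpace n) (tau n A) (Subtype.val ⁻¹' Bdry n)) :
    @NormalSpace (HalfSpace n) (tau n A) := by
  have hn : 0 < n := by omega
  letI := tau n A
  haveI := normalY hA hn
  constructor
  intro F G hF hG hFG
  have hsY : IsClosed (Subtype.val ⁻¹' F : Set (Subtype.val ⁻¹' Bdry n : Set (HalfSpace n))) :=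
    hF.preimage continuous_subtype_val
  have htY : IsClosed (Subtype.val ⁻¹' G : Set (Subtype.val ⁻¹' Bdry n : Set (HalfSpace n))) :=
    hG.preimage continuous_subtype_val
  have hdY : Disjoint (Subtype.val ⁻¹' F : Set (Subtype.val ⁻¹' Bdry n : Set (HalfSpace n)))
      (Subtype.val ⁻¹' G) := Disjoint.preimage _ hFG
  obtain ⟨f, hf0, hf1, hf01⟩ := exists_continuous_zero_one_of_isClosed hsY htY hdY
  obtain ⟨g, hgc, -, hg⟩ := hC f f.continuous ⟨1, fun y => by
    have := hf01 y; rw [abs_le]; constructor <;> [linarith [this.1]; exact this.2]⟩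
  -- radii at interior points of F and G
  have hFd : ∀ x : HalfSpace n, ∃ δ, 0 < δ ∧ (x ∈ F → 0 < lastCoord n x.1 →
      (δ ≤ lastCoord n x.1 ∧ ∀ z ∈ G, δ ≤ dist z.1 x.1)) := by
    intro x
    by_cases hx : x ∈ F ∧ 0 < lastCoord n x.1
    · obtain ⟨δ, h1, h2, h3⟩ := pointsep hA hn hG hx.2 (fun h => Set.disjoint_left.1 hFG hx.1 h)
      exact ⟨δ, h1, fun _ _ => ⟨h2, h3⟩⟩
    · exact ⟨1, one_pos, fun h1 h2 => absurd ⟨h1, h2⟩ hx⟩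
  have hGd : ∀ x : HalfSpace n, ∃ δ, 0 < δ ∧ (x ∈ G → 0 < lastCoord n x.1 →
      (δ ≤ lastCoord n x.1 ∧ ∀ z ∈ F, δ ≤ dist z.1 x.1)) := by
    intro x
    by_cases hx : x ∈ G ∧ 0 < lastCoord n x.1
    · obtain ⟨δ, h1, h2, h3⟩ := pointsep hA hn hF hx.2 (fun h => Set.disjoint_right.1 hFG hx.1 h)
      exact ⟨δ, h1, fun _ _ => ⟨h2, h3⟩⟩
    · exact ⟨1, one_pos, fun h1 h2 => absurd ⟨h1, h2⟩ hx⟩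
  choose dF hdF0 hdFP using hFd
  choose dG hdG0 hdGP using hGd
  set U2 := ⋃ x ∈ {w : HalfSpace n | w ∈ F ∧ 0 < lastCoord n w.1},
    Subtype.val ⁻¹' ball x.1 (dF x / 4) with hU2def
  set V2 := ⋃ x ∈ {w : HalfSpace n | w ∈ G ∧ 0 < lastCoord n w.1},
    Subtype.val ⁻¹' ball x.1 (dG x / 4) with hV2def
  set U1 := {x : HalfSpace n | g x < 1/3} ∩ Gᶜ with hU1def
  set V1 := {x : HalfSpace n | 2/3 < g x} ∩ Fᶜ with hV1def
  have hU2o : IsOpen U2 := isOpen_biUnion (fun x _ => isOpen_tau_euclid hA hn isOpen_ball)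
  have hV2o : IsOpen V2 := isOpen_biUnion (fun x _ => isOpen_tau_euclid hA hn isOpen_ball)
  have hU1o : IsOpen U1 := ((isOpen_Iio (a := (1/3:ℝ))).preimage hgc).inter hG.isOpen_compl
  have hV1o : IsOpen V1 := ((isOpen_Ioi (a := (2/3:ℝ))).preimage hgc).inter hF.isOpen_compl
  -- the closure-avoidance properties
  have hV2S : ∀ z ∈ V2, ∃ y ∈ G, dist y.1 z.1 < lastCoord n z.1 / 2 := by
    intro z hz
    simp only [hV2def, mem_iUnion, mem_preimage, mem_setOf_eq] at hz
    obtain ⟨c, ⟨hcG, hclc⟩, hzc⟩ := hz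
    rw [mem_ball] at hzc
    refine ⟨c, hcG, ?_⟩
    have h1 : dG c ≤ lastCoord n c.1 := (hdGP c hcG hclc).1
    have h2 : |lastCoord n z.1 - lastCoord n c.1| ≤ dist z.1 c.1 := abs_lastCoord_sub_le _ _
    rw [abs_le] at h2
    rw [dist_comm]
    linarith [h2.1, hdG0 c]
  have hU2S : ∀ z ∈ U2, ∃ y ∈ F, dist y.1 z.1 < lastCoord n z.1 / 2 := by
    intro z hz
    simp only [hU2def, mem_iUnion, mem_preimage, mem_setOf_eq] at hz
    obtain ⟨c, ⟨hcF, hclc⟩, hzc⟩ := hz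
    rw [mem_ball] at hzc
    refine ⟨c, hcF, ?_⟩
    have h1 : dF c ≤ lastCoord n c.1 := (hdFP c hcF hclc).1
    have h2 : |lastCoord n z.1 - lastCoord n c.1| ≤ dist z.1 c.1 := abs_lastCoord_sub_le _ _
    rw [abs_le] at h2
    rw [dist_comm]
    linarith [h2.1, hdF0 c]
  refine ⟨(U1 \ closure V2) ∪ U2, (V1 \ closure U2) ∪ V2,
    ((hU1o.sdiff isClosed_closure).union hU2o),
    ((hV1o.sdiff isClosed_closure).union hV2o), ?_, ?_, ?_⟩
  · -- F ⊆ U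
    intro x hxF
    by_cases hxP : 0 < lastCoord n x.1
    · right
      refine mem_biUnion (⟨hxF, hxP⟩ : x ∈ {w : HalfSpace n | w ∈ F ∧ 0 < lastCoord n w.1}) ?_
      simp only [mem_preimage, mem_ball, dist_self]
      linarith [hdF0 x]
    · left
      have hlx : lastCoord n x.1 = 0 := lc_eq_zero_of_not_pos hxP
      have hxY : x.1 ∈ Bdry n := hlx
      have hxnotG : x ∉ G := fun h => Set.disjoint_left.1 hFG hxF h
      refine ⟨⟨?_, hxnotG⟩, not_mem_closure_aux hA hn hG hlx hxnotG hV2S⟩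
      have := hg ⟨x, hxY⟩
      have hfx : f ⟨x, hxY⟩ = 0 := hf0 (by exact hxF)
      simp only [mem_setOf_eq]
      rw [this, hfx]
      norm_num
  · -- G ⊆ V
    intro x hxG
    by_cases hxP : 0 < lastCoord n x.1
    · right
      refine mem_biUnion (⟨hxG, hxP⟩ : x ∈ {w : HalfSpace n | w ∈ G ∧ 0 < lastCoord n w.1}) ?_
      simp only [mem_preimage, mem_ball, dist_self]
      linarith [hdG0 x]
    · left
      have hlx : lastCoord n x.1 = 0 := lc_eq_zero_of_not_pos hxP
      have hxY : x.1 ∈ Bdry n := hlx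
      have hxnotF : x ∉ F := fun h => Set.disjoint_right.1 hFG hxG h
      refine ⟨⟨?_, hxnotF⟩, not_mem_closure_aux hA hn hF hlx hxnotF hU2S⟩
      have := hg ⟨x, hxY⟩
      have hfx : f ⟨x, hxY⟩ = 1 := hf1 (by exact hxG)
      simp only [mem_setOf_eq]
      rw [this, hfx]
      norm_num
  · -- disjointness
    rw [Set.disjoint_left]
    rintro z (⟨⟨hz1, -⟩, hz2⟩ | hz3) (⟨⟨hw1, -⟩, hw2⟩ | hw3)
    · simp only [mem_setOf_eq] at hz1 hw1; linarith
    · exact hz2 (subset_closure hw3)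
    · exact hw2 (subset_closure hz3)
    · simp only [hU2def, hV2def, mem_iUnion, mem_preimage, mem_setOf_eq] at hz3 hw3
      obtain ⟨x, ⟨hxF, hxP⟩, hzx⟩ := hz3
      obtain ⟨y, ⟨hyG, hyP⟩, hzy⟩ := hw3
      rw [mem_ball] at hzx hzy
      have h1 : dF x ≤ dist y.1 x.1 := (hdFP x hxF hxP).2 y hyG
      have h2 : dG y ≤ dist x.1 y.1 := (hdGP y hyG hyP).2 x hxF
      have h3 := dist_triangle y.1 z.1 x.1
      rw [dist_comm y.1 z.1] at h3
      rw [dist_comm x.1 y.1] at h2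
      have := dist_nonneg (x := y.1) (y := x.1)
      linarith

end cstarnormal
section gj
open Metric Set TopologicalSpace Filter Topology

variable {n : ℕ} {A : Set (EuclideanSpace ℝ (Fin n))}

lemma normal_cstar (hA : A ⊆ Bdry n) (hn : 0 < n)
    (hN : @NormalSpace (HalfSpace n) (tau n A)) :
    @CStarEmbedded (HalfSpace n) (tau n A) (Subtype.val ⁻¹' Bdry n) := by
  letI := tau n A
  haveI := hN
  rintro f hf ⟨M, hM⟩
  obtain ⟨g, hg⟩ := ContinuousMap.exists_restrict_eq (isClosed_L hA hn)
    (⟨f, hf⟩ : C((Subtype.val ⁻¹' Bdry n : Set (HalfSpace n)), ℝ))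
  set M' := max M 0 with hM'
  have hMM' : M ≤ M' := le_max_left _ _
  have hM'0 : 0 ≤ M' := le_max_right _ _
  refine ⟨fun x => max (-M') (min (g x) M'), ?_, ⟨M', fun x => ?_⟩, fun y => ?_⟩
  · exact continuous_const.max ((map_continuous g).min continuous_const)
  · show |max (-M') (min (g x) M')| ≤ M'
    rw [abs_le]
    exact ⟨le_max_left _ _, max_le (by linarith) (min_le_right _ _)⟩
  · have hgy : g ↑y = f y := by
      have := congrFun (congrArg DFunLike.coe hg) y
      simpa [ContinuousMap.restrict_apply] using this
    show max (-M') (min (g ↑y) M') = f y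
    rw [hgy]
    have h1 : |f y| ≤ M' := (hM y).trans hMM'
    rw [abs_le] at h1
    rw [min_eq_left h1.2, max_eq_right (by linarith [h1.1])]

lemma cstar_zemb {W : Type*} [TopologicalSpace W] {Y : Set W} (hC : CStarEmbedded Y) :
    ZEmbedded Y := by
  rintro s ⟨h, hh, rfl⟩
  obtain ⟨g, hgc, -, hgext⟩ := hC (fun y => min (|h y|) 1) ((hh.abs).min continuous_const)
    ⟨1, fun y => by
      rw [abs_of_nonneg (le_min (abs_nonneg _) zero_le_one)]
      exact min_le_right _ _⟩
  refine ⟨g ⁻¹' {0}, ⟨g, hgc, rfl⟩, ?_⟩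
  ext y
  simp only [mem_preimage, mem_singleton_iff, hgext y]
  constructor
  · intro hy
    rw [hy]
    simp
  · intro hy
    rcases min_eq_iff.1 hy with ⟨h1, -⟩ | ⟨h1, -⟩
    · exact abs_eq_zero.1 h1
    · linarith
end gj

section blair
open Metric Set TopologicalSpace Filter Topology

lemma sep_H_of_zemb {W : Type*} [TopologicalSpace W] {Y : Set W} (l : W → ℝ)
    (hl : Continuous l) (hY : ∀ x, x ∈ Y ↔ l x = 0) (hz : ZEmbedded Y)
    (u : Y → ℝ) (hu : Continuous u) (r : ℝ) (hr : 0 < r) :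
    ∃ v : W → ℝ, Continuous v ∧ (∀ x, |v x| ≤ r) ∧
      (∀ y : Y, u y ≤ -r → v ↑y = -r) ∧ (∀ y : Y, r ≤ u y → v ↑y = r) := by
  obtain ⟨Z1, ⟨w1, hw1c, hZ1⟩, hs⟩ := hz {y | u y ≤ -r}
    ⟨fun y => max (u y + r) 0, (hu.add continuous_const).max continuous_const, by
      ext y
      simp only [mem_setOf_eq, mem_preimage, mem_singleton_iff]
      constructor
      · intro hy; exact max_eq_right (by linarith)
      · intro hy; have := le_max_left (u y + r) 0; rw [hy] at this; linarith⟩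
  obtain ⟨Z2, ⟨w2, hw2c, hZ2⟩, ht⟩ := hz {y | r ≤ u y}
    ⟨fun y => max (r - u y) 0, ((continuous_const.sub hu)).max continuous_const, by
      ext y
      simp only [mem_setOf_eq, mem_preimage, mem_singleton_iff]
      constructor
      · intro hy; exact max_eq_right (by linarith)
      · intro hy; have := le_max_left (r - u y) 0; rw [hy] at this; linarith⟩
  subst hZ1; subst hZ2
  have hs' : ∀ y : Y, u y ≤ -r ↔ w1 ↑y = 0 := by
    intro y
    constructor
    · intro h; have : y ∈ Subtype.val ⁻¹' (w1 ⁻¹' {0}) := hs ▸ h; exact this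
    · intro h
      have h2 : y ∈ Subtype.val ⁻¹' (w1 ⁻¹' {0}) := h
      rw [← hs] at h2
      exact h2
  have ht' : ∀ y : Y, r ≤ u y ↔ w2 ↑y = 0 := by
    intro y
    constructor
    · intro h; have : y ∈ Subtype.val ⁻¹' (w2 ⁻¹' {0}) := ht ▸ h; exact this
    · intro h
      have h2 : y ∈ Subtype.val ⁻¹' (w2 ⁻¹' {0}) := h
      rw [← ht] at h2
      exact h2
  set D := fun x => |l x| + |w1 x| + |w2 x| with hD
  have hD0 : ∀ x, 0 < D x := by
    intro x
    have hDx : D x = |l x| + |w1 x| + |w2 x| := rfl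
    have hln := abs_nonneg (l x)
    have h1n := abs_nonneg (w1 x)
    have h2n := abs_nonneg (w2 x)
    rcases lt_or_eq_of_le (by rw [hDx]; positivity : (0:ℝ) ≤ D x) with h | h
    · exact h
    rw [hDx] at h
    have h1 : |l x| = 0 ∧ |w1 x| = 0 ∧ |w2 x| = 0 :=
      ⟨by linarith, by linarith, by linarith⟩
    have hxY : x ∈ Y := (hY x).2 (abs_eq_zero.1 h1.1)
    have hc1 : u ⟨x, hxY⟩ ≤ -r := (hs' ⟨x, hxY⟩).2 (abs_eq_zero.1 h1.2.1)
    have hc2 : r ≤ u ⟨x, hxY⟩ := (ht' ⟨x, hxY⟩).2 (abs_eq_zero.1 h1.2.2)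
    linarith
  set k := fun x => |l x| / D x with hk
  have hkc : Continuous k := (hl.abs).div
    ((hl.abs.add hw1c.abs).add hw2c.abs) (fun x => ne_of_gt (hD0 x))
  have hk01 : ∀ x, 0 ≤ k x ∧ k x ≤ 1 := by
    intro x
    constructor
    · exact div_nonneg (abs_nonneg _) (le_of_lt (hD0 x))
    · rw [div_le_one (hD0 x)]
      have := abs_nonneg (w1 x)
      have := abs_nonneg (w2 x)
      simp only [hD]
      linarith
  have hkY : ∀ x, x ∈ Y → k x = 0 := by
    intro x hx
    simp only [hk, (hY x).1 hx, abs_zero, zero_div]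
  set q := fun x => max (k x - 1/2) (0:ℝ) with hq
  have hqc : Continuous q := (hkc.sub continuous_const).max continuous_const
  set z1 := fun x => |w1 x| + q x with hz1
  set z2 := fun x => |w2 x| + q x with hz2
  have hz1c : Continuous z1 := hw1c.abs.add hqc
  have hz2c : Continuous z2 := hw2c.abs.add hqc
  have hz1n : ∀ x, 0 ≤ z1 x := fun x => add_nonneg (abs_nonneg _) (le_max_right _ _)
  have hz2n : ∀ x, 0 ≤ z2 x := fun x => add_nonneg (abs_nonneg _) (le_max_right _ _)
  have hzz : ∀ x, 0 < z1 x + z2 x := by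
    intro x
    rcases lt_or_eq_of_le (add_nonneg (hz1n x) (hz2n x)) with h | h
    · exact h
    exfalso
    have hhx : (0:ℝ) = |w1 x| + q x + (|w2 x| + q x) := h
    have h1 := abs_nonneg (w1 x)
    have h2 := abs_nonneg (w2 x)
    have h3 : (0:ℝ) ≤ q x := le_max_right _ _
    have hq0 : q x = 0 := by linarith
    have hw10 : w1 x = 0 := abs_eq_zero.1 (by linarith)
    have hw20 : w2 x = 0 := abs_eq_zero.1 (by linarith)
    have hxnY : x ∉ Y := by
      intro hxY
      have hc1 : u ⟨x, hxY⟩ ≤ -r := (hs' ⟨x, hxY⟩).2 hw10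
      have hc2 : r ≤ u ⟨x, hxY⟩ := (ht' ⟨x, hxY⟩).2 hw20
      linarith
    have hlx : l x ≠ 0 := fun h0 => hxnY ((hY x).2 h0)
    have hk1 : k x = 1 := by
      simp only [hk, hD, hw10, hw20, abs_zero, add_zero]
      exact div_self (fun h0 => hlx (abs_eq_zero.1 h0))
    have : q x = 1/2 := by simp only [hq, hk1]; norm_num
    rw [hq0] at this
    norm_num at this
  set v0 := fun x => z1 x / (z1 x + z2 x) with hv0
  have hv0c : Continuous v0 := hz1c.div (hz1c.add hz2c) (fun x => ne_of_gt (hzz x))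
  have hv001 : ∀ x, 0 ≤ v0 x ∧ v0 x ≤ 1 := by
    intro x
    constructor
    · exact div_nonneg (hz1n x) (le_of_lt (hzz x))
    · rw [div_le_one (hzz x)]
      linarith [hz2n x]
  refine ⟨fun x => r * (2 * v0 x - 1), (continuous_const.mul
    ((continuous_const.mul hv0c).sub continuous_const)), fun x => ?_, fun y hy => ?_, fun y hy => ?_⟩
  · rw [abs_mul, abs_of_pos hr]
    have h1 := (hv001 x).1; have h2 := (hv001 x).2
    have : |2 * v0 x - 1| ≤ 1 := by rw [abs_le]; constructor <;> linarith
    nlinarith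
  · have hw10 : w1 ↑y = 0 := (hs' y).1 hy
    have hqy : q ↑y = 0 := by
      have : k ↑y = 0 := hkY _ y.2
      simp only [hq, this]
      norm_num
    have hv : v0 ↑y = 0 := by
      simp only [hv0, hz1, hw10, abs_zero, hqy, add_zero, zero_div]
    show r * (2 * v0 ↑y - 1) = -r
    rw [hv]
    ring
  · have hw20 : w2 ↑y = 0 := (ht' y).1 hy
    have hqy : q ↑y = 0 := by
      have : k ↑y = 0 := hkY _ y.2
      simp only [hq, this]
      norm_num
    have hz2y : z2 ↑y = 0 := by simp only [hz2, hw20, abs_zero, hqy, add_zero]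
    have hv : v0 ↑y = 1 := by
      have hne : z1 ↑y ≠ 0 := by
        intro h0
        have := hzz ↑y
        rw [hz2y, add_zero, h0] at this
        exact lt_irrefl 0 this
      simp only [hv0, hz2y, add_zero]
      exact div_self hne
    show r * (2 * v0 ↑y - 1) = r
    rw [hv]
    ring

end blair
section gjrec
open Metric Set TopologicalSpace Filter Topology

lemma cstar_of_H {W : Type*} [TopologicalSpace W] {Y : Set W}
    (H : ∀ u : Y → ℝ, Continuous u → ∀ r : ℝ, 0 < r →
      ∃ v : W → ℝ, Continuous v ∧ (∀ x, |v x| ≤ r) ∧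
        (∀ y : Y, u y ≤ -r → v ↑y = -r) ∧ (∀ y : Y, r ≤ u y → v ↑y = r)) :
    CStarEmbedded Y := by
  rintro f hf ⟨M0, hM0⟩
  set M := max M0 1 with hM
  have hM1 : 0 < M := lt_of_lt_of_le one_pos (le_max_right _ _)
  have hfM : ∀ y, |f y| ≤ M * (2/3)^(0:ℕ) := by
    intro y; rw [pow_zero, mul_one]; exact (hM0 y).trans (le_max_left _ _)
  have step : ∀ (m : ℕ) (u : Y → ℝ), Continuous u → (∀ y, |u y| ≤ M*(2/3)^m) →
      ∃ v : W → ℝ, Continuous v ∧ (∀ x, |v x| ≤ M*(2/3)^m/3) ∧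
        Continuous (fun y : Y => u y - v ↑y) ∧
        (∀ y : Y, |u y - v ↑y| ≤ M*(2/3)^(m+1)) := by
    intro m u hu hub
    have hr : 0 < M*(2/3)^m/3 := by positivity
    obtain ⟨v, hvc, hvb, hv1, hv2⟩ := H u hu _ hr
    refine ⟨v, hvc, hvb, hu.sub (hvc.comp continuous_subtype_val), fun y => ?_⟩
    have hnext : M*(2/3)^(m+1) = 2*(M*(2/3)^m/3) := by rw [pow_succ]; ring
    have hub' := hub y
    rw [abs_le] at hub'
    rw [hnext, abs_le]
    rcases le_or_gt (u y) (-(M*(2/3)^m/3)) with h1 | h1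
    · rw [hv1 y h1]
      constructor <;> linarith [hub'.1, hub'.2]
    · rcases le_or_gt (M*(2/3)^m/3) (u y) with h2 | h2
      · rw [hv2 y h2]
        constructor <;> linarith [hub'.1, hub'.2]
      · have hb := hvb ↑y
        rw [abs_le] at hb
        constructor <;> linarith [hb.1, hb.2]
  let T : ℕ → Type _ := fun m => {u : Y → ℝ // Continuous u ∧ ∀ y, |u y| ≤ M*(2/3)^m}
  let next : ∀ m, T m → T (m+1) := fun m p =>
    ⟨fun y => p.1 y - (step m p.1 p.2.1 p.2.2).choose ↑y,
      (step m p.1 p.2.1 p.2.2).choose_spec.2.2.1,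
      (step m p.1 p.2.1 p.2.2).choose_spec.2.2.2⟩
  let useq : ∀ m, T m := fun m => Nat.rec ⟨f, hf, hfM⟩ next m
  let g0 : ℕ → W → ℝ := fun m => (step m (useq m).1 (useq m).2.1 (useq m).2.2).choose
  have hg0c : ∀ m, Continuous (g0 m) := fun m => (step m (useq m).1 (useq m).2.1 (useq m).2.2).choose_spec.1
  have hg0b : ∀ m x, ‖g0 m x‖ ≤ M/3*(2/3)^m := by
    intro m x
    have h1 := (step m (useq m).1 (useq m).2.1 (useq m).2.2).choose_spec.2.1 x
    rw [Real.norm_eq_abs]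
    calc |g0 m x| ≤ M*(2/3)^m/3 := h1
      _ = M/3*(2/3)^m := by ring
  have hrec : ∀ m (y : Y), (useq (m+1)).1 y = (useq m).1 y - g0 m ↑y := fun m y => rfl
  have hsummable : Summable (fun m => M/3*(2/3:ℝ)^m) :=
    (summable_geometric_of_lt_one (by norm_num) (by norm_num)).mul_left _
  have hgeo : ∑' (m:ℕ), M/3*(2/3:ℝ)^m = M := by
    rw [tsum_mul_left, tsum_geometric_of_lt_one (by norm_num) (by norm_num)]
    norm_num
  refine ⟨fun x => ∑' m, g0 m x, continuous_tsum hg0c hsummable (fun m x => hg0b m x),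
    ⟨M, fun x => ?_⟩, fun y => ?_⟩
  · have hns : Summable (fun m => ‖g0 m x‖) :=
      Summable.of_nonneg_of_le (fun m => norm_nonneg _) (fun m => hg0b m x) hsummable
    calc |∑' m, g0 m x| = ‖∑' m, g0 m x‖ := (Real.norm_eq_abs _).symm
      _ ≤ ∑' m, ‖g0 m x‖ := norm_tsum_le_tsum_norm hns
      _ ≤ ∑' m, M/3*(2/3)^m := Summable.tsum_le_tsum (fun m => hg0b m x) hns hsummable
      _ = M := hgeo
  · have hpart : ∀ m, ∑ k ∈ Finset.range m, g0 k ↑y = f y - (useq m).1 y := by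
      intro m
      induction m with
      | zero => simp [useq]
      | succ m ih => rw [Finset.sum_range_succ, ih, hrec m y]; ring
    have htend : Tendsto (fun m => (useq m).1 y) atTop (𝓝 0) := by
      have hb : ∀ m : ℕ, ‖(useq m).1 y‖ ≤ M*(2/3)^m := fun m =>
        (le_of_eq (Real.norm_eq_abs _)).trans ((useq m).2.2 y)
      have h2 : Tendsto (fun m : ℕ => M*(2/3:ℝ)^m) atTop (𝓝 (0:ℝ)) := by
        have h3 := (tendsto_pow_atTop_nhds_zero_of_lt_one
          (by norm_num : (0:ℝ) ≤ 2/3) (by norm_num)).const_mul M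
        simpa using h3
      exact squeeze_zero_norm hb h2
    have hsumy : Summable (fun m => g0 m ↑y) :=
      Summable.of_norm_bounded hsummable (fun m => hg0b m ↑y)
    have hsum : HasSum (fun m => g0 m ↑y) (f y) := by
      rw [hsumy.hasSum_iff_tendsto_nat]
      have heq : (fun m => ∑ k ∈ Finset.range m, g0 k ↑y)
          = fun m => f y - (useq m).1 y := funext hpart
      rw [heq]
      simpa using tendsto_const_nhds.sub htend
    exact hsum.tsum_eq

end gjrec
/-- For every `n ≥ 2` and `A ⊆ L`, the following are equivalent: (i) `(X, τ(A))` is normal;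
(ii) `L` is `C*`-embedded in `(X, τ(A))`; (iii) `L` is z-embedded in `(X, τ(A))`. -/
theorem tauA_normal_tfae (n : ℕ) (hn : 2 ≤ n)
    (A : Set (EuclideanSpace ℝ (Fin n))) (hA : A ⊆ Bdry n) :
    [@NormalSpace (HalfSpace n) (tau n A),
     @CStarEmbedded (HalfSpace n) (tau n A) (Subtype.val ⁻¹' Bdry n),
     @ZEmbedded (HalfSpace n) (tau n A) (Subtype.val ⁻¹' Bdry n)].TFAE := by
  have hn0 : 0 < n := by omega
  tfae_have 1 → 2 := fun h => normal_cstar hA hn0 h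
  tfae_have 2 → 3 := fun h => @cstar_zemb _ (tau n A) _ h
  tfae_have 3 → 2 := fun h =>
    @cstar_of_H _ (tau n A) _ (fun u hu r hr =>
      @sep_H_of_zemb _ (tau n A) _ (fun x => lastCoord n x.1) (cont_lc hA hn0)
        (fun x => Iff.rfl) h u hu r hr)
  tfae_have 2 → 1 := fun h => cstar_normal hn hA h
  tfae_finish
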